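/- arXiv:2001.02714 — 2 statements merged into one kernel-verified Lean document; each statement's English description precedes it below -/
import Mathlib

section
/- Suppose Σ₀ satisfies the Lyapunov equation Σ₀ = A_z' Σ₀ (A_z')ᵀ + Q' with ρ(A_z') < 1, and Σ_∞ ≥ 0 satisfies the Riccati equation Σ_∞ = A_z' Σ_∞ (A_z')ᵀ + Q' − (A_z' Σ_∞ C_zᵀ + S)(C_z Σ_∞ C_zᵀ + R)^{-1}(A_z' Σ_∞ C_zᵀ + S)ᵀ with C_z Σ_∞ C_zᵀ + R positive definite. Then Σ₀ − Σ_∞ ≥ 0. -/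
open Matrix Filter Topology

noncomputable def specRad {n : ℕ} (A : Matrix (Fin n) (Fin n) ℝ) : ENNReal :=
  spectralRadius ℂ (A.map (algebraMap ℝ ℂ))

lemma pow_tendsto_zero_of_specRad_lt_one {n : ℕ} (A : Matrix (Fin n) (Fin n) ℝ)
    (h : specRad A < 1) :
    Tendsto (fun k : ℕ => A ^ k) atTop (𝓝 0) := by
  set B : Matrix (Fin n) (Fin n) ℂ := A.map (algebraMap ℝ ℂ) with hBdef
  set e := Matrix.toEuclideanCLM (𝕜 := ℂ) (n := Fin n) with hedef
  have hrad : spectralRadius ℂ (e B) < 1 := by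
    have hs : spectrum ℂ (e B) = spectrum ℂ B := AlgEquiv.spectrum_eq e B
    simpa only [spectralRadius, hs, specRad] using h
  obtain ⟨r, hr1, hr2⟩ := exists_between hrad
  have hrne : r ≠ ⊤ := (hr2.trans_le le_top).ne
  set t : NNReal := r.toNNReal with htdef
  have htr : (t : ENNReal) = r := ENNReal.coe_toNNReal hrne
  have ht1 : (t : ℝ) < 1 := by
    have := hr2
    rw [← htr] at this
    exact_mod_cast this
  have hg := spectrum.pow_nnnorm_pow_one_div_tendsto_nhds_spectralRadius (e B)
  have hev : ∀ᶠ (k : ℕ) in atTop, (‖(e B) ^ k‖₊ : ENNReal) ^ (1 / (k : ℝ)) < r :=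
    hg.eventually_lt_const hr1
  have hbound : ∀ᶠ k in atTop, ‖(e B) ^ k‖ ≤ (t : ℝ) ^ k := by
    filter_upwards [hev, eventually_ge_atTop 1] with k hk hk1
    have hkne : (k : ℝ) ≠ 0 := Nat.cast_ne_zero.mpr (by omega)
    have h1 : ((‖(e B) ^ k‖₊ : ENNReal) ^ (1 / (k : ℝ))) ^ (k : ℝ) ≤ r ^ (k : ℝ) :=
      ENNReal.rpow_le_rpow hk.le (by positivity)
    rw [← ENNReal.rpow_mul, one_div, inv_mul_cancel₀ hkne, ENNReal.rpow_one,
      ENNReal.rpow_natCast, ← htr, ← ENNReal.coe_pow, ENNReal.coe_le_coe] at h1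
    exact_mod_cast h1
  have hnorm : Tendsto (fun k : ℕ => ‖(e B) ^ k‖) atTop (𝓝 0) := by
    have h0 : Tendsto (fun k : ℕ => (t : ℝ) ^ k) atTop (𝓝 0) :=
      tendsto_pow_atTop_nhds_zero_of_lt_one t.2 ht1
    refine squeeze_zero' (Eventually.of_forall fun k => norm_nonneg _) hbound h0
  have hT : Tendsto (fun k : ℕ => (e B) ^ k) atTop (𝓝 0) := by
    rwa [tendsto_zero_iff_norm_tendsto_zero]
  have heB : ∀ k : ℕ, (e B) ^ k = e (B ^ k) := fun k => (map_pow e B k).symm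
  have hcont : Continuous (e.symm) := by
    let f : (EuclideanSpace ℂ (Fin n) →L[ℂ] EuclideanSpace ℂ (Fin n)) →ₗ[ℂ]
        Matrix (Fin n) (Fin n) ℂ :=
      { toFun := e.symm
        map_add' := map_add e.symm
        map_smul' := map_smul e.symm }
    exact f.continuous_of_finiteDimensional
  have hBk : Tendsto (fun k : ℕ => B ^ k) atTop (𝓝 0) := by
    have := (hcont.tendsto 0).comp hT
    simp only [Function.comp_def, heB, StarAlgEquiv.symm_apply_apply, map_zero] at this
    exact this
  have hmap : ∀ k : ℕ, B ^ k = (A ^ k).map (algebraMap ℝ ℂ) := by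
    intro k
    rw [hBdef, ← RingHom.mapMatrix_apply, ← RingHom.mapMatrix_apply, ← map_pow]
  refine tendsto_pi_nhds.mpr ?_
  intro i
  refine tendsto_pi_nhds.mpr ?_
  intro j
  have h1 : Tendsto (fun k : ℕ => (B ^ k) i j) atTop (𝓝 0) := by
    have hc : Continuous fun M : Matrix (Fin n) (Fin n) ℂ => M i j :=
      (continuous_apply j).comp (continuous_apply i)
    have := (hc.tendsto 0).comp hBk
    simpa [Function.comp_def] using this
  have h2 : Tendsto (fun k : ℕ => ((B ^ k) i j).re) atTop (𝓝 0) := by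
    simpa [Function.comp_def] using (Complex.continuous_re.tendsto 0).comp h1
  have h3 : ∀ k : ℕ, ((B ^ k) i j).re = (A ^ k) i j := by
    intro k
    rw [hmap k]
    simp [Matrix.map_apply]
  simpa only [h3, Matrix.zero_apply, Pi.zero_apply] using h2

theorem stmt_8 {n p : ℕ}
    (Az' : Matrix (Fin n) (Fin n) ℝ) (hρ : specRad Az' < 1)
    (Q' : Matrix (Fin n) (Fin n) ℝ) (hQ' : Q'.PosSemidef)
    (Cz : Matrix (Fin p) (Fin n) ℝ)
    (S : Matrix (Fin n) (Fin p) ℝ)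
    (R : Matrix (Fin p) (Fin p) ℝ) (hR : R.PosDef)
    (Sigma0 Sinf : Matrix (Fin n) (Fin n) ℝ)
    (hSinfPSD : Sinf.PosSemidef)
    (hLyap : Sigma0 = Az' * Sigma0 * Az'ᵀ + Q')
    (hInnov : (Cz * Sinf * Czᵀ + R).PosDef)
    (hRic : Sinf = Az' * Sinf * Az'ᵀ + Q' -
      (Az' * Sinf * Czᵀ + S) * (Cz * Sinf * Czᵀ + R)⁻¹ * (Az' * Sinf * Czᵀ + S)ᵀ) :
    (Sigma0 - Sinf).PosSemidef := by
  set K : Matrix (Fin n) (Fin p) ℝ := Az' * Sinf * Czᵀ + S with hKdef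
  set M : Matrix (Fin p) (Fin p) ℝ := Cz * Sinf * Czᵀ + R with hMdef
  set W : Matrix (Fin n) (Fin n) ℝ := K * M⁻¹ * Kᵀ with hWdef
  have hKT : Kᵀ = Kᴴ := by
    ext i j; simp [conjTranspose_apply]
  have hW : W.PosSemidef := by
    rw [hWdef, hKT]
    exact hInnov.inv.posSemidef.mul_mul_conjTranspose_same K
  set Δ : Matrix (Fin n) (Fin n) ℝ := Sigma0 - Sinf with hΔdef
  have hΔ : Δ = Az' * Δ * Az'ᵀ + W := by
    rw [hΔdef]
    nth_rewrite 1 [hLyap, hRic]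
    noncomm_ring
  have hpow : Tendsto (fun k : ℕ => Az' ^ k) atTop (𝓝 0) :=
    pow_tendsto_zero_of_specRad_lt_one Az' hρ
  -- symmetry
  have hWsymm : Wᵀ = W := by
    have h := hW.isHermitian
    ext i j
    have h2 := congrFun (congrFun h i) j
    simpa [conjTranspose_apply] using h2
  have hE : (Δ - Δᵀ) = Az' * (Δ - Δᵀ) * Az'ᵀ := by
    have hΔT : Δᵀ = Az' * Δᵀ * Az'ᵀ + W := by
      nth_rewrite 1 [hΔ]
      rw [transpose_add, transpose_mul, transpose_mul, transpose_transpose, hWsymm]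
      noncomm_ring
    nth_rewrite 1 [hΔ, hΔT]
    noncomm_ring
  have hEk : ∀ k : ℕ, (Δ - Δᵀ) = Az' ^ k * (Δ - Δᵀ) * Az'ᵀ ^ k := by
    intro k
    induction k with
    | zero => simp
    | succ m ih =>
      nth_rewrite 1 [hE]
      nth_rewrite 1 [ih]
      rw [pow_succ' Az' m, pow_succ Az'ᵀ m]
      noncomm_ring
  have hE0 : Δ - Δᵀ = 0 := by
    have hc : Continuous fun X : Matrix (Fin n) (Fin n) ℝ => X * (Δ - Δᵀ) * Xᵀ :=
      (continuous_id.matrix_mul continuous_const).matrix_mul continuous_id.matrix_transpose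
    have h1 : Tendsto (fun k : ℕ => Az' ^ k * (Δ - Δᵀ) * Az'ᵀ ^ k) atTop (𝓝 0) := by
      have := (hc.tendsto 0).comp hpow
      simpa only [Function.comp_def, transpose_pow, transpose_zero, zero_mul, mul_zero]
        using this
    have h2 : Tendsto (fun _ : ℕ => Δ - Δᵀ) atTop (𝓝 (Δ - Δᵀ)) := tendsto_const_nhds
    have h3 : Tendsto (fun k : ℕ => Az' ^ k * (Δ - Δᵀ) * Az'ᵀ ^ k) atTop (𝓝 (Δ - Δᵀ)) := by
      refine Tendsto.congr (fun k => (hEk k)) h2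
    exact tendsto_nhds_unique h3 h1
  rw [posSemidef_iff_dotProduct_mulVec]
  constructor
  · rw [IsHermitian]
    have : Δᴴ = Δᵀ := by ext i j; simp [conjTranspose_apply]
    rw [this]
    rw [sub_eq_zero] at hE0
    exact hE0.symm
  · intro x
    rw [star_trivial]
    -- single step inequality
    have hstep : ∀ y : Fin n → ℝ, (Az'ᵀ *ᵥ y) ⬝ᵥ Δ *ᵥ (Az'ᵀ *ᵥ y) ≤ y ⬝ᵥ Δ *ᵥ y := by
      intro y
      nth_rewrite 2 [hΔ]
      rw [add_mulVec, dotProduct_add]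
      have h1 : y ⬝ᵥ (Az' * Δ * Az'ᵀ) *ᵥ y = (Az'ᵀ *ᵥ y) ⬝ᵥ Δ *ᵥ (Az'ᵀ *ᵥ y) := by
        rw [← mulVec_mulVec, ← mulVec_mulVec, dotProduct_mulVec, ← mulVec_transpose]
      have h2 : 0 ≤ y ⬝ᵥ W *ᵥ y := by
        have := (posSemidef_iff_dotProduct_mulVec.mp hW).2 y
        rwa [star_trivial] at this
      rw [h1]
      linarith
    have hiter : ∀ k : ℕ, (Az'ᵀ ^ k *ᵥ x) ⬝ᵥ Δ *ᵥ (Az'ᵀ ^ k *ᵥ x) ≤ x ⬝ᵥ Δ *ᵥ x := by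
      intro k
      induction k with
      | zero => simp
      | succ m ih =>
        have hv : Az'ᵀ ^ (m + 1) *ᵥ x = Az'ᵀ *ᵥ (Az'ᵀ ^ m *ᵥ x) := by
          rw [mulVec_mulVec, ← pow_succ']
        rw [hv]
        exact le_trans (hstep _) ih
    have hy : Tendsto (fun k : ℕ => Az'ᵀ ^ k *ᵥ x) atTop (𝓝 0) := by
      have hc : Continuous fun X : Matrix (Fin n) (Fin n) ℝ => Xᵀ *ᵥ x :=
        (continuous_id.matrix_transpose).matrix_mulVec continuous_const
      have := (hc.tendsto 0).comp hpow
      simpa only [Function.comp_def, transpose_pow, transpose_zero, zero_mulVec] using this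
    have hq : Tendsto (fun k : ℕ => (Az'ᵀ ^ k *ᵥ x) ⬝ᵥ Δ *ᵥ (Az'ᵀ ^ k *ᵥ x)) atTop (𝓝 0) := by
      have hc : Continuous fun y : Fin n → ℝ => y ⬝ᵥ Δ *ᵥ y :=
        continuous_id.dotProduct (continuous_const.matrix_mulVec continuous_id)
      have := (hc.tendsto 0).comp hy
      simpa only [Function.comp_def, Matrix.mulVec_zero, dotProduct_zero] using this
    exact le_of_tendsto hq (Eventually.of_forall hiter)
end

section
/- Consider the time-invariant observer error covariance recursion Σ(k+1) = (A_z − L_z C_z) Σ(k) (A_z − L_z C_z)ᵀ + N(L_z), where L_z = [L₁; L₂], A_z = [[A, B C_c],[0, A_c]], C_z = [C, 0], and N(L_z) = [[Σ_w + L₁ Σ_v L₁ᵀ, L₁ Σ_v L₂ᵀ],[L₂ Σ_v L₁ᵀ, L₂ Σ_v L₂ᵀ]] with Σ_v positive definite. Then a matrix of the form Σ̃_∞ = [[P̃, 0],[0, 0]] is a fixed point of this recursion if and only if L₂ = 0 and P̃ = (A − L₁C) P̃ (A − L₁C)ᵀ + Σ_w + L₁ Σ_v L₁ᵀ. -/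
open Matrix

open scoped MatrixOrder in
lemma aux_zero_of_mul_posDef_mul {n m : ℕ} {M : Matrix (Fin n) (Fin n) ℝ}
    (hM : M.PosDef) {L : Matrix (Fin m) (Fin n) ℝ} (h : L * M * Lᵀ = 0) : L = 0 := by
  have hs := hM.posSemidef
  set S := CFC.sqrt M with hS
  have hSh : Sᴴ = S := (CFC.sqrt_nonneg M).posSemidef.isHermitian
  have heq : L * M * Lᵀ = (L * S) * (L * S)ᴴ := by
    rw [Matrix.conjTranspose_mul, hSh, ← CFC.sqrt_mul_sqrt_self M hs.nonneg, ← hS]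
    have hLt : Lᴴ = Lᵀ := rfl
    rw [← hLt]
    noncomm_ring [Matrix.mul_assoc]
  have hLS : L * S = 0 := Matrix.self_mul_conjTranspose_eq_zero.mp (heq ▸ h)
  have hLM : L * M = 0 := by
    rw [← CFC.sqrt_mul_sqrt_self M hs.nonneg, ← Matrix.mul_assoc, ← hS, hLS, Matrix.zero_mul]
  calc L = L * M * M⁻¹ := by
          rw [Matrix.mul_assoc, Matrix.mul_nonsing_inv _ (Matrix.isUnit_iff_isUnit_det _ |>.1 hM.isUnit), Matrix.mul_one]
       _ = 0 := by rw [hLM, Matrix.zero_mul]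

theorem stmt_9 {nx ny nc : ℕ}
    (A : Matrix (Fin nx) (Fin nx) ℝ) (C : Matrix (Fin ny) (Fin nx) ℝ)
    (BCc : Matrix (Fin nx) (Fin nc) ℝ) (Ac : Matrix (Fin nc) (Fin nc) ℝ)
    (Sw : Matrix (Fin nx) (Fin nx) ℝ) (hSw : Sw.PosSemidef)
    (Sv : Matrix (Fin ny) (Fin ny) ℝ) (hSv : Sv.PosDef)
    (L₁ : Matrix (Fin nx) (Fin ny) ℝ) (L₂ : Matrix (Fin nc) (Fin ny) ℝ)
    (Az : Matrix (Fin nx ⊕ Fin nc) (Fin nx ⊕ Fin nc) ℝ)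
    (hAz : Az = fromBlocks A BCc 0 Ac)
    (Cz : Matrix (Fin ny) (Fin nx ⊕ Fin nc) ℝ) (hCz : Cz = fromCols C 0)
    (Lz : Matrix (Fin nx ⊕ Fin nc) (Fin ny) ℝ) (hLz : Lz = fromRows L₁ L₂)
    (N : Matrix (Fin nx ⊕ Fin nc) (Fin nx ⊕ Fin nc) ℝ)
    (hN : N = fromBlocks (Sw + L₁ * Sv * L₁ᵀ) (L₁ * Sv * L₂ᵀ) (L₂ * Sv * L₁ᵀ) (L₂ * Sv * L₂ᵀ))
    (Pt : Matrix (Fin nx) (Fin nx) ℝ) (hPt : Pt.PosSemidef)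
    (St : Matrix (Fin nx ⊕ Fin nc) (Fin nx ⊕ Fin nc) ℝ)
    (hSt : St = fromBlocks Pt 0 0 0) :
    St = (Az - Lz * Cz) * St * (Az - Lz * Cz)ᵀ + N ↔
      (L₂ = 0 ∧ Pt = (A - L₁ * C) * Pt * (A - L₁ * C)ᵀ + Sw + L₁ * Sv * L₁ᵀ) := by
  subst hAz hCz hLz hN hSt
  have hLC : fromRows L₁ L₂ * fromCols C 0 = fromBlocks (L₁ * C) (0 : Matrix (Fin nx) (Fin nc) ℝ) (L₂ * C) (0 : Matrix (Fin nc) (Fin nc) ℝ) := by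
    rw [fromRows_mul_fromCols]; simp
  rw [hLC]
  have hM : fromBlocks A BCc 0 Ac - fromBlocks (L₁ * C) 0 (L₂ * C) 0 =
      fromBlocks (A - L₁ * C) BCc (-(L₂ * C)) Ac := by
    rw [sub_eq_add_neg, fromBlocks_neg, fromBlocks_add]; simp [sub_eq_add_neg]
  rw [hM, fromBlocks_transpose, fromBlocks_multiply, fromBlocks_multiply, fromBlocks_add,
    fromBlocks_inj]
  simp only [Matrix.mul_zero, Matrix.zero_mul, add_zero, zero_add, Matrix.transpose_neg,
    Matrix.mul_neg, Matrix.neg_mul, neg_neg]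
  constructor
  · rintro ⟨h11, h12, h21, h22⟩
    have hpd : (C * Pt * Cᵀ + Sv).PosDef :=
      Matrix.PosDef.posSemidef_add (hPt.mul_mul_conjTranspose_same C) hSv
    have hL2 : L₂ = 0 := by
      apply aux_zero_of_mul_posDef_mul hpd
      have : L₂ * (C * Pt * Cᵀ + Sv) * L₂ᵀ =
          L₂ * C * Pt * (L₂ * C)ᵀ + L₂ * Sv * L₂ᵀ := by
        rw [Matrix.transpose_mul]
        simp only [Matrix.mul_add, Matrix.add_mul, Matrix.mul_assoc]
      rw [this, ← h22]
    exact ⟨hL2, by rwa [← add_assoc] at h11⟩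
  · rintro ⟨hL2, hrec⟩
    subst hL2
    rw [add_assoc] at hrec
    refine ⟨hrec, ?_, ?_, ?_⟩ <;> simp
end
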